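/- Suppose μ₁ < ρμ₂ (so μ₁ < μ₂ and μ₁/μ₂ < ρ < 1). Then g(t,s) = g₂(s) for all (t,s) ∈ D₂ and g(t,s) = g₃(t,s) for all (t,s) ∈ D₁. Moreover, g₃(f₁(s), s) = g₃(w₁(s), s) = g₂(s) for all s ≥ s₁*. -/

import Mathlib

open Matrix

/-- The covariance matrix of `(X₁(t), X₂(s))`. -/
noncomputable def covM (ρ t s : ℝ) : Matrix (Fin 2) (Fin 2) ℝ :=
  !![t, ρ * min t s; ρ * min t s, s]

/-- The quadratic form `(x,y) Σ_{ts}⁻¹ (x,y)ᵀ`. -/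
noncomputable def quadF (ρ t s x y : ℝ) : ℝ :=
  dotProduct ![x, y] ((covM ρ t s)⁻¹.mulVec ![x, y])

/-- `g(t,s) = inf{ (x,y) Σ_{ts}⁻¹ (x,y)ᵀ : x ≥ 1+μ₁t, y ≥ 1+μ₂s }`. -/
noncomputable def gFun (μ₁ μ₂ ρ t s : ℝ) : ℝ :=
  sInf { q : ℝ | ∃ x y : ℝ, 1 + μ₁ * t ≤ x ∧ 1 + μ₂ * s ≤ y ∧ q = quadF ρ t s x y }

/-- `g₃(t,s)`: the quadratic form at the corner point `(1+μ₁t, 1+μ₂s)`. -/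
noncomputable def g3Fun (μ₁ μ₂ ρ t s : ℝ) : ℝ :=
  quadF ρ t s (1 + μ₁ * t) (1 + μ₂ * s)

/-- `g₂(s) = (1+μ₂s)²/s`. -/
noncomputable def g2Fun (μ₂ s : ℝ) : ℝ := (1 + μ₂ * s) ^ 2 / s

/-- `f₁(s) = (ρ−1)/μ₁ + (ρμ₂/μ₁)s`. -/
noncomputable def f1Fun (μ₁ μ₂ ρ s : ℝ) : ℝ := (ρ - 1) / μ₁ + ρ * μ₂ / μ₁ * s

/-- `w₁(s) = s/(ρ + (ρμ₂−μ₁)s)`. -/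
noncomputable def w1Fun (μ₁ μ₂ ρ s : ℝ) : ℝ := s / (ρ + (ρ * μ₂ - μ₁) * s)

/-- The region `D₂ = {(t,s) ∈ (0,∞)² : w₁(s) ≤ t ≤ f₁(s)}`. -/
def D2 (μ₁ μ₂ ρ : ℝ) : Set (ℝ × ℝ) :=
  { p : ℝ × ℝ | 0 < p.1 ∧ 0 < p.2 ∧
      w1Fun μ₁ μ₂ ρ p.2 ≤ p.1 ∧ p.1 ≤ f1Fun μ₁ μ₂ ρ p.2 }

/-- The region `D₁ = (0,∞)² \ D₂`. -/
def D1 (μ₁ μ₂ ρ : ℝ) : Set (ℝ × ℝ) :=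
  { p : ℝ × ℝ | 0 < p.1 ∧ 0 < p.2 } \ D2 μ₁ μ₂ ρ

lemma quadF_eq (ρ t s x y : ℝ) (hd : t * s - (ρ * min t s)^2 ≠ 0) :
    quadF ρ t s x y
      = (s*x^2 - 2*(ρ*min t s)*x*y + t*y^2) / (t*s - (ρ*min t s)^2) := by
  unfold quadF covM
  rw [Matrix.inv_def, Matrix.adjugate_fin_two]
  simp only [Matrix.det_fin_two_of]
  have hd' : t * s - ρ ^ 2 * (min t s) ^ 2 ≠ 0 := by
    intro h; apply hd; rw [← h]; ring
  have h1 : (t * s - ρ ^ 2 * (min t s) ^ 2) * (t * s - ρ ^ 2 * (min t s) ^ 2)⁻¹ = 1 :=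
    mul_inv_cancel₀ hd'
  simp [Matrix.mulVec, dotProduct, Fin.sum_univ_two]
  rw [eq_div_iff hd]
  linear_combination (s * x ^ 2 - 2 * (ρ * min t s) * x * y + t * y ^ 2) * h1

lemma det_pos' {ρ t s : ℝ} (hρl : -1 < ρ) (hρu : ρ < 1) (ht : 0 < t) (hs : 0 < s) :
    0 < t * s - (ρ * min t s) ^ 2 := by
  have hm1 : min t s ≤ t := min_le_left t s
  have hm2 : min t s ≤ s := min_le_right t s
  have hm0 : 0 < min t s := lt_min ht hs
  have hρ2 : ρ ^ 2 < 1 := by nlinarith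
  nlinarith [mul_lt_mul_of_pos_right hρ2 (mul_pos hm0 hm0),
    mul_le_mul hm1 hm2 hm0.le ht.le]

lemma sInf_eq_of {S : Set ℝ} {M : ℝ} (hM : M ∈ S) (hlb : ∀ q ∈ S, M ≤ q) : sInf S = M :=
  le_antisymm (csInf_le ⟨M, fun q hq => hlb q hq⟩ hM) (le_csInf ⟨M, hM⟩ hlb)

lemma gFun_eq_g2' (μ₁ μ₂ ρ t s : ℝ) (ht : 0 < t) (hs : 0 < s)
    (hb : 0 < 1 + μ₂ * s) (hρl : -1 < ρ) (hρu : ρ < 1)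
    (hC : s * (1 + μ₁ * t) ≤ ρ * min t s * (1 + μ₂ * s)) :
    gFun μ₁ μ₂ ρ t s = g2Fun μ₂ s := by
  have hd := det_pos' hρl hρu ht hs
  apply sInf_eq_of
  · refine ⟨ρ * min t s * (1 + μ₂ * s) / s, 1 + μ₂ * s, ?_, le_refl _, ?_⟩
    · rw [le_div_iff₀ hs]; linarith
    · rw [quadF_eq _ _ _ _ _ hd.ne', g2Fun, div_eq_div_iff hs.ne' hd.ne']
      field_simp
      ring
  · rintro q ⟨x, y, hx, hy, rfl⟩
    rw [quadF_eq _ _ _ _ _ hd.ne', g2Fun, div_le_div_iff₀ hs hd]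
    have hy2 : (1 + μ₂ * s) ^ 2 ≤ y ^ 2 := by nlinarith
    nlinarith [sq_nonneg (s * x - ρ * min t s * y), mul_le_mul_of_nonneg_left hy2 hd.le]

lemma gFun_eq_g3' (μ₁ μ₂ ρ t s : ℝ) (ht : 0 < t) (hs : 0 < s)
    (hρl : -1 < ρ) (hρu : ρ < 1)
    (hC1 : ρ * min t s * (1 + μ₂ * s) ≤ s * (1 + μ₁ * t))
    (hC2 : ρ * min t s * (1 + μ₁ * t) ≤ t * (1 + μ₂ * s)) :
    gFun μ₁ μ₂ ρ t s = quadF ρ t s (1 + μ₁ * t) (1 + μ₂ * s) := by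
  have hd := det_pos' hρl hρu ht hs
  apply sInf_eq_of
  · exact ⟨1 + μ₁ * t, 1 + μ₂ * s, le_refl _, le_refl _, rfl⟩
  · rintro q ⟨x, y, hx, hy, rfl⟩
    rw [quadF_eq _ _ _ _ _ hd.ne', quadF_eq _ _ _ _ _ hd.ne',
      div_le_div_iff₀ hd hd]
    have h1 : 0 ≤ (s * (1 + μ₁ * t) - ρ * min t s * (1 + μ₂ * s)) * (x - (1 + μ₁ * t)) :=
      mul_nonneg (by linarith) (by linarith)
    have h2 : 0 ≤ (t * (1 + μ₂ * s) - ρ * min t s * (1 + μ₁ * t)) * (y - (1 + μ₂ * s)) :=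
      mul_nonneg (by linarith) (by linarith)
    nlinarith [sq_nonneg (s * (x - (1 + μ₁ * t)) - ρ * min t s * (y - (1 + μ₂ * s))),
      mul_nonneg hd.le (sq_nonneg (y - (1 + μ₂ * s))),
      mul_pos hs hd, mul_nonneg hs.le h1, mul_nonneg hs.le h2]

theorem stmt9 (μ₁ μ₂ ρ : ℝ) (hμ1 : 0 < μ₁) (hμ12 : μ₁ ≤ μ₂)
    (hρl : -1 < ρ) (hρu : ρ < 1) (hρμ : μ₁ < ρ * μ₂) :
    (∀ t s : ℝ, (t, s) ∈ D2 μ₁ μ₂ ρ → gFun μ₁ μ₂ ρ t s = g2Fun μ₂ s) ∧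
    (∀ t s : ℝ, (t, s) ∈ D1 μ₁ μ₂ ρ → gFun μ₁ μ₂ ρ t s = g3Fun μ₁ μ₂ ρ t s) ∧
    (∀ s : ℝ, (1 - ρ) / (ρ * μ₂ - μ₁) ≤ s →
      g3Fun μ₁ μ₂ ρ (f1Fun μ₁ μ₂ ρ s) s = g2Fun μ₂ s ∧
      g3Fun μ₁ μ₂ ρ (w1Fun μ₁ μ₂ ρ s) s = g2Fun μ₂ s) := by
  have hμ2 : 0 < μ₂ := lt_of_lt_of_le hμ1 hμ12
  have hρ0 : 0 < ρ := by nlinarith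
  have hδ : 0 < ρ * μ₂ - μ₁ := by linarith
  refine ⟨?_, ?_, ?_⟩
  · -- D2 case
    rintro t s ⟨ht, hs, hw, hf⟩
    simp only at ht hs hw hf
    have hdw : 0 < ρ + (ρ * μ₂ - μ₁) * s := by positivity
    have hb : 0 < 1 + μ₂ * s := by positivity
    have heq : f1Fun μ₁ μ₂ ρ s = (ρ - 1 + ρ * μ₂ * s) / μ₁ := by
      rw [f1Fun]; field_simp
    apply gFun_eq_g2' μ₁ μ₂ ρ t s ht hs hb hρl hρu
    rcases le_total t s with hts | hts
    · rw [min_eq_left hts]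
      rw [w1Fun, div_le_iff₀ hdw] at hw
      nlinarith
    · rw [min_eq_right hts]
      rw [heq, le_div_iff₀ hμ1] at hf
      nlinarith
  · -- D1 case
    rintro t s ⟨⟨ht, hs⟩, hnot⟩
    simp only at ht hs
    have hdw : 0 < ρ + (ρ * μ₂ - μ₁) * s := by positivity
    have ha : 0 < 1 + μ₁ * t := by positivity
    have hb : 0 < 1 + μ₂ * s := by positivity
    have heq : f1Fun μ₁ μ₂ ρ s = (ρ - 1 + ρ * μ₂ * s) / μ₁ := by
      rw [f1Fun]; field_simp
    have hC2 : ρ * min t s * (1 + μ₁ * t) ≤ t * (1 + μ₂ * s) := by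
      rcases le_total t s with hts | hts
      · rw [min_eq_left hts]
        have h1 : μ₁ * t ≤ μ₂ * s := by nlinarith
        nlinarith [mul_nonneg ht.le (sub_nonneg.2 h1), mul_pos ht ht,
          mul_nonneg (mul_nonneg ht.le ht.le) hμ1.le]
      · rw [min_eq_right hts]
        have h2 : ρ * μ₁ ≤ μ₂ := by nlinarith
        nlinarith [mul_nonneg (mul_pos ht hs).le (sub_nonneg.2 h2)]
    have hC1 : ρ * min t s * (1 + μ₂ * s) ≤ s * (1 + μ₁ * t) := by
      have hnot' : t < w1Fun μ₁ μ₂ ρ s ∨ f1Fun μ₁ μ₂ ρ s < t := by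
        by_contra h
        push_neg at h
        exact hnot ⟨ht, hs, h.1, h.2⟩
      rcases hnot' with hcw | hcf
      · rw [w1Fun, lt_div_iff₀ hdw] at hcw
        rcases le_total t s with hts | hts
        · rw [min_eq_left hts]; nlinarith
        · rw [min_eq_right hts]
          have hlt1 : ρ + (ρ * μ₂ - μ₁) * s < 1 := by
            nlinarith [mul_le_mul_of_nonneg_right hts hdw.le]
          have h3 : μ₁ * s ≤ μ₁ * t := mul_le_mul_of_nonneg_left hts hμ1.le
          have h4 : 0 < 1 + μ₁ * t - ρ - ρ * μ₂ * s := by nlinarith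
          nlinarith [mul_pos hs h4]
      · rw [heq, div_lt_iff₀ hμ1] at hcf
        rcases le_total s t with hts | hts
        · rw [min_eq_right hts]; nlinarith
        · rw [min_eq_left hts]
          have h3 : μ₁ * t ≤ μ₁ * s := mul_le_mul_of_nonneg_left hts hμ1.le
          have hlt1 : ρ + (ρ * μ₂ - μ₁) * s < 1 := by nlinarith
          nlinarith [mul_le_mul_of_nonneg_right hts hdw.le, mul_pos hs hdw]
    exact gFun_eq_g3' μ₁ μ₂ ρ t s ht hs hρl hρu hC1 hC2
  · -- boundary values
    intro s hsge
    have hs : 0 < s := lt_of_lt_of_le (div_pos (by linarith) hδ) hsge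
    have hs1 : 1 - ρ ≤ (ρ * μ₂ - μ₁) * s := by
      rw [div_le_iff₀ hδ] at hsge; linarith
    have hdw : 0 < ρ + (ρ * μ₂ - μ₁) * s := by positivity
    constructor
    · set t := f1Fun μ₁ μ₂ ρ s with htdef
      have heq : f1Fun μ₁ μ₂ ρ s = (ρ - 1 + ρ * μ₂ * s) / μ₁ := by
        rw [f1Fun]; field_simp
      have hts : s ≤ t := by
        rw [htdef, heq, le_div_iff₀ hμ1]; nlinarith
      have ht : 0 < t := lt_of_lt_of_le hs hts
      have hkey : 1 + μ₁ * t = ρ * (1 + μ₂ * s) := by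
        rw [htdef, f1Fun]; field_simp; ring
      have hd := det_pos' hρl hρu ht hs
      rw [g3Fun, quadF_eq _ _ _ _ _ hd.ne', min_eq_right hts, g2Fun,
        div_eq_div_iff (by rw [min_eq_right hts] at hd; exact hd.ne') hs.ne']
      rw [hkey]
      ring
    · set t := w1Fun μ₁ μ₂ ρ s with htdef
      have htw : t * (ρ + (ρ * μ₂ - μ₁) * s) = s := by
        rw [htdef, w1Fun]; field_simp
      have ht : 0 < t := by rw [htdef, w1Fun]; positivity
      have hts : t ≤ s := by
        rw [htdef, w1Fun]
        apply div_le_self hs.le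
        linarith
      have hkey : s * (1 + μ₁ * t) = ρ * t * (1 + μ₂ * s) := by
        linarith [htw]
      have hd := det_pos' hρl hρu ht hs
      rw [g3Fun, quadF_eq _ _ _ _ _ hd.ne', min_eq_left hts, g2Fun,
        div_eq_div_iff (by rw [min_eq_left hts] at hd; exact hd.ne') hs.ne']
      linear_combination (s * (1 + μ₁ * t) - ρ * t * (1 + μ₂ * s)) * hkey
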